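/- Let A and B be real symmetric n×n matrices with the same distinct eigenvalues λ₁,…,λ_s, with spectral decompositions A = Σ λ_k P_k P_k^T and B = Σ λ_k R_k R_k^T, and α, α̃, β, β̃ ∈ ℝ^n. Suppose ‖P_k^T α‖ = ‖R_k^T β‖ and ‖P_k^T α̃‖ = ‖R_k^T β̃‖ for all k, and that A + αα^T + α̃α̃^T and B + ββ^T + β̃β̃^T have the same characteristic polynomial. Then (Σ_k ⟨P_k^T α, P_k^T α̃⟩/(x−λ_k))² = (Σ_k ⟨R_k^T β, R_k^T β̃⟩/(x−λ_k))² for all x not among λ₁,…,λ_s, and consequently either ⟨P_k^T α, P_k^T α̃⟩ = ⟨R_k^T β, R_k^T β̃⟩ for all k, or ⟨P_k^T α, P_k^T α̃⟩ = −⟨R_k^T β, R_k^T β̃⟩ for all k. -/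
import Mathlib
open Matrix Polynomial

lemma eval_charpoly' {n : ℕ} (M : Matrix (Fin n) (Fin n) ℝ) (x : ℝ) :
    (M.charpoly).eval x = (x • (1 : Matrix (Fin n) (Fin n) ℝ) - M).det := by
  rw [Matrix.charpoly, ← Polynomial.coe_evalRingHom, RingHom.map_det]
  congr 1
  ext i j
  by_cases h : i = j <;>
    simp [h, Matrix.charmatrix_apply_eq, Matrix.charmatrix_apply_ne, Matrix.one_apply]

lemma det_resolvent {n s : ℕ} (A : Matrix (Fin n) (Fin n) ℝ) (hA : A.IsSymm)
    (lam : Fin s → ℝ) (hlam : Function.Injective lam) (r : Fin s → ℕ)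
    (P : ∀ k, Matrix (Fin n) (Fin (r k)) ℝ)
    (hP1 : ∀ k, (P k)ᵀ * P k = 1)
    (hP2 : ∀ k, A * P k = lam k • P k)
    (hPcomp : ∑ k, P k * (P k)ᵀ = 1) (x : ℝ) :
    (x • (1 : Matrix (Fin n) (Fin n) ℝ) - A).det
      = ∏ p : (Σ k : Fin s, Fin (r k)), (x - lam p.1) := by
  -- orthogonality between different eigenspaces
  have horth : ∀ k l, k ≠ l → (P k)ᵀ * P l = 0 := by
    intro k l hkl
    have h1 : (P k)ᵀ * A = lam k • (P k)ᵀ := by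
      calc (P k)ᵀ * A = (Aᵀ * P k)ᵀ := by rw [Matrix.transpose_mul, Matrix.transpose_transpose]
        _ = (A * P k)ᵀ := by rw [hA.eq]
        _ = lam k • (P k)ᵀ := by rw [hP2, Matrix.transpose_smul]
    have h2 : lam k • ((P k)ᵀ * P l) = lam l • ((P k)ᵀ * P l) := by
      calc lam k • ((P k)ᵀ * P l) = ((P k)ᵀ * A) * P l := by rw [h1, Matrix.smul_mul]
        _ = (P k)ᵀ * (A * P l) := by rw [Matrix.mul_assoc]
        _ = lam l • ((P k)ᵀ * P l) := by rw [hP2, Matrix.mul_smul]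
    have h3 : (lam k - lam l) • ((P k)ᵀ * P l) = 0 := by
      rw [sub_smul, h2, sub_self]
    rcases smul_eq_zero.mp h3 with h | h
    · exact absurd (sub_eq_zero.mp h) (fun h => hkl (hlam h))
    · exact h
  -- cardinality
  have hcard : Fintype.card (Σ k : Fin s, Fin (r k)) = n := by
    have ht : ((n : ℝ)) = ∑ k, (r k : ℝ) := by
      have := congrArg Matrix.trace hPcomp
      rw [Matrix.trace_sum, Matrix.trace_one] at this
      rw [Fintype.card_fin] at this
      rw [← this]
      refine (Finset.sum_congr rfl fun k _ => ?_).symm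
      rw [Matrix.trace_mul_comm, hP1, Matrix.trace_one, Fintype.card_fin]
    have : (n : ℝ) = ((∑ k, r k : ℕ) : ℝ) := by rw [ht]; push_cast; ring
    have hn : n = ∑ k, r k := Nat.cast_injective this
    simp [Fintype.card_sigma, hn]
  let e : (Σ k : Fin s, Fin (r k)) ≃ Fin n := Fintype.equivFinOfCardEq hcard
  set ι := (Σ k : Fin s, Fin (r k))
  let Q : Matrix (Fin n) ι ℝ := Matrix.of fun i p => P p.1 i p.2
  let d : ι → ℝ := fun p => x - lam p.1
  have hQQ : Qᵀ * Q = 1 := by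
    ext ⟨k, i⟩ ⟨l, j⟩
    have hentry : (Qᵀ * Q) ⟨k, i⟩ ⟨l, j⟩ = ((P k)ᵀ * P l) i j := by
      simp [Matrix.mul_apply, Q]
    by_cases hkl : k = l
    · subst hkl
      rw [hentry, hP1]
      by_cases hij : i = j
      · subst hij; simp [Matrix.one_apply]
      · rw [Matrix.one_apply_ne hij, Matrix.one_apply_ne]
        simp [hij]
    · rw [hentry, horth k l hkl, Matrix.one_apply_ne (fun h => hkl (congrArg Sigma.fst h))]
      simp
  have hMQ : (x • (1 : Matrix (Fin n) (Fin n) ℝ) - A) * Q = Q * Matrix.diagonal d := by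
    ext i p
    have h1 : (x • (1 : Matrix (Fin n) (Fin n) ℝ) - A) * P p.1 = (x - lam p.1) • P p.1 := by
      rw [Matrix.sub_mul, Matrix.smul_mul, Matrix.one_mul, hP2, sub_smul]
    have h2 : ((x • (1 : Matrix (Fin n) (Fin n) ℝ) - A) * Q) i p
        = ((x • (1 : Matrix (Fin n) (Fin n) ℝ) - A) * P p.1) i p.2 := by
      simp [Matrix.mul_apply, Q]
    rw [h2, h1, Matrix.mul_diagonal]
    simp [Q, d, mul_comm]
  -- squared versions
  let Q' : Matrix (Fin n) (Fin n) ℝ := Q.submatrix id e.symm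
  have hQ'Q' : Q'ᵀ * Q' = 1 := by
    ext a b
    have h1 : (Q'ᵀ * Q') a b = (Qᵀ * Q) (e.symm a) (e.symm b) := by
      simp [Matrix.mul_apply, Q', Matrix.submatrix_apply]
    rw [h1, hQQ]
    by_cases hab : a = b
    · subst hab; simp
    · rw [Matrix.one_apply_ne (fun h => hab (e.symm.injective h)), Matrix.one_apply_ne hab]
  have hdet2 : Q'.det * Q'.det = 1 := by
    have := congrArg Matrix.det hQ'Q'
    rwa [Matrix.det_mul, Matrix.det_transpose, Matrix.det_one] at this
  have hdetne : Q'.det ≠ 0 := by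
    intro h
    rw [h, mul_zero] at hdet2
    exact zero_ne_one hdet2
  have hMQ' : (x • (1 : Matrix (Fin n) (Fin n) ℝ) - A) * Q'
      = Q' * ((Matrix.diagonal d).submatrix e.symm e.symm) := by
    have h1 : (x • (1 : Matrix (Fin n) (Fin n) ℝ) - A) * Q'
        = ((x • (1 : Matrix (Fin n) (Fin n) ℝ) - A) * Q).submatrix id e.symm := by
      ext i a
      simp [Matrix.mul_apply, Q', Matrix.submatrix_apply]
    rw [h1, hMQ, ← Matrix.submatrix_mul_equiv Q (Matrix.diagonal d) id (e.symm) e.symm]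
  have hfinal := congrArg Matrix.det hMQ'
  rw [Matrix.det_mul, Matrix.det_mul, Matrix.det_submatrix_equiv_self,
    Matrix.det_diagonal, mul_comm Q'.det] at hfinal
  exact mul_right_cancel₀ hdetne hfinal

section
variable {n s : ℕ} (A : Matrix (Fin n) (Fin n) ℝ) (lam : Fin s → ℝ)
    (r : Fin s → ℕ) (P : ∀ k, Matrix (Fin n) (Fin (r k)) ℝ)

lemma resolvent_inv (hP2 : ∀ k, A * P k = lam k • P k)
    (hPcomp : ∑ k, P k * (P k)ᵀ = 1) (x : ℝ) (hx : ∀ k, x ≠ lam k) :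
    (x • (1 : Matrix (Fin n) (Fin n) ℝ) - A) *
      (∑ k, (x - lam k)⁻¹ • (P k * (P k)ᵀ)) = 1 := by
  rw [Finset.mul_sum]
  calc ∑ k, (x • (1 : Matrix (Fin n) (Fin n) ℝ) - A) * ((x - lam k)⁻¹ • (P k * (P k)ᵀ))
      = ∑ k, (x - lam k)⁻¹ • (((x • (1 : Matrix (Fin n) (Fin n) ℝ) - A) * P k) * (P k)ᵀ) := by
        simp [Matrix.mul_smul, Matrix.mul_assoc]
    _ = ∑ k, (x - lam k)⁻¹ • (((x - lam k) • P k) * (P k)ᵀ) := by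
        refine Finset.sum_congr rfl fun k _ => ?_
        rw [Matrix.sub_mul, Matrix.smul_mul, Matrix.one_mul, hP2, sub_smul]
    _ = ∑ k, P k * (P k)ᵀ := by
        refine Finset.sum_congr rfl fun k _ => ?_
        rw [Matrix.smul_mul, smul_smul, inv_mul_cancel₀ (sub_ne_zero.mpr (hx k)), one_smul]
    _ = 1 := hPcomp

lemma quad_form (x : ℝ) (u v : Fin n → ℝ) :
    u ⬝ᵥ (∑ k, (x - lam k)⁻¹ • (P k * (P k)ᵀ)).mulVec v
      = ∑ k, ((P k)ᵀ.mulVec u ⬝ᵥ (P k)ᵀ.mulVec v) / (x - lam k) := by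
  have hsum : ∀ (f : Fin s → Matrix (Fin n) (Fin n) ℝ),
      (∑ k, f k).mulVec v = ∑ k, (f k).mulVec v := by
    intro f
    ext i
    simp only [Matrix.mulVec, dotProduct, Finset.sum_apply, Matrix.sum_apply, Finset.sum_mul]
    rw [Finset.sum_comm]
  have hdot : ∀ (w : Fin s → (Fin n → ℝ)), u ⬝ᵥ (∑ k, w k) = ∑ k, u ⬝ᵥ w k := by
    intro w
    simp only [dotProduct, Finset.sum_apply, Finset.mul_sum]
    rw [Finset.sum_comm]
  rw [hsum, hdot]
  refine Finset.sum_congr rfl fun k _ => ?_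
  rw [Matrix.smul_mulVec, dotProduct_smul, ← Matrix.mulVec_mulVec,
    Matrix.dotProduct_mulVec, ← Matrix.mulVec_transpose]
  simp [div_eq_mul_inv, mul_comm]
end

lemma key_det {n s : ℕ} (A : Matrix (Fin n) (Fin n) ℝ) (lam : Fin s → ℝ)
    (r : Fin s → ℕ) (P : ∀ k, Matrix (Fin n) (Fin (r k)) ℝ)
    (hP2 : ∀ k, A * P k = lam k • P k)
    (hPcomp : ∑ k, P k * (P k)ᵀ = 1)
    (α α' : Fin n → ℝ) (x : ℝ) (hx : ∀ k, x ≠ lam k) :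
    (x • (1 : Matrix (Fin n) (Fin n) ℝ)
        - (A + Matrix.vecMulVec α α + Matrix.vecMulVec α' α')).det =
      (x • (1 : Matrix (Fin n) (Fin n) ℝ) - A).det *
        ((1 - ∑ k, ((P k)ᵀ.mulVec α ⬝ᵥ (P k)ᵀ.mulVec α) / (x - lam k)) *
         (1 - ∑ k, ((P k)ᵀ.mulVec α' ⬝ᵥ (P k)ᵀ.mulVec α') / (x - lam k)) -
         (∑ k, ((P k)ᵀ.mulVec α ⬝ᵥ (P k)ᵀ.mulVec α') / (x - lam k)) ^ 2) := by
  set M : Matrix (Fin n) (Fin n) ℝ := x • 1 - A with hM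
  set N : Matrix (Fin n) (Fin n) ℝ := ∑ k, (x - lam k)⁻¹ • (P k * (P k)ᵀ) with hN
  have hMN : M * N = 1 := resolvent_inv A lam r P hP2 hPcomp x hx
  let W : Matrix (Fin n) (Fin 2) ℝ := Matrix.of fun i j => if j = 0 then α i else α' i
  have hW : W * Wᵀ = Matrix.vecMulVec α α + Matrix.vecMulVec α' α' := by
    ext i j
    simp [Matrix.mul_apply, Fin.sum_univ_two, Matrix.vecMulVec_apply, W]
  have hsplit : x • (1 : Matrix (Fin n) (Fin n) ℝ)
      - (A + Matrix.vecMulVec α α + Matrix.vecMulVec α' α') = M - W * Wᵀ := by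
    rw [hW, hM]
    abel
  have hfact : M - W * Wᵀ = M * (1 - N * (W * Wᵀ)) := by
    rw [Matrix.mul_sub, Matrix.mul_one, ← Matrix.mul_assoc, hMN, Matrix.one_mul]
  have hcW0 : (fun i => W i 0) = α := by funext i; simp [W]
  have hcW1 : (fun i => W i 1) = α' := by funext i; simp [W]
  set G : Matrix (Fin 2) (Fin 2) ℝ := Wᵀ * (N * W) with hG
  have hGapp : ∀ a b, G a b = (fun i => W i a) ⬝ᵥ N.mulVec (fun i => W i b) := by
    intro a b
    simp only [hG, Matrix.mul_apply, Matrix.transpose_apply, Matrix.mulVec,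
      dotProduct]
  have hdet1 : (1 - N * (W * Wᵀ)).det = (1 - G).det := by
    have h1 : (1 : Matrix (Fin n) (Fin n) ℝ) - N * (W * Wᵀ) = 1 + (-(N * W)) * Wᵀ := by
      rw [Matrix.neg_mul, Matrix.mul_assoc]
      abel
    have h2 : (1 : Matrix (Fin 2) (Fin 2) ℝ) - G = 1 + Wᵀ * (-(N * W)) := by
      rw [Matrix.mul_neg, hG]
      abel
    rw [h1, h2, Matrix.det_one_add_mul_comm]
  have hG00 : G 0 0 = ∑ k, ((P k)ᵀ.mulVec α ⬝ᵥ (P k)ᵀ.mulVec α) / (x - lam k) := by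
    rw [hGapp, hcW0, hN]; exact quad_form lam r P x α α
  have hG11 : G 1 1 = ∑ k, ((P k)ᵀ.mulVec α' ⬝ᵥ (P k)ᵀ.mulVec α') / (x - lam k) := by
    rw [hGapp, hcW1, hN]; exact quad_form lam r P x α' α'
  have hG01 : G 0 1 = ∑ k, ((P k)ᵀ.mulVec α ⬝ᵥ (P k)ᵀ.mulVec α') / (x - lam k) := by
    rw [hGapp, hcW0, hcW1, hN]; exact quad_form lam r P x α α'
  have hG10 : G 1 0 = ∑ k, ((P k)ᵀ.mulVec α ⬝ᵥ (P k)ᵀ.mulVec α') / (x - lam k) := by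
    rw [hGapp, hcW1, hcW0, hN, quad_form lam r P x α' α]
    exact Finset.sum_congr rfl fun k _ => by rw [dotProduct_comm]
  rw [hsplit, hfact, Matrix.det_mul, hdet1, Matrix.det_fin_two]
  simp only [Matrix.sub_apply, Matrix.one_apply_eq, Matrix.one_apply_ne (by decide : (0 : Fin 2) ≠ 1),
    Matrix.one_apply_ne (by decide : (1 : Fin 2) ≠ 0), hG00, hG11, hG01, hG10]
  ring

lemma sum_div_sq_cases {s : ℕ} (lam : Fin s → ℝ) (hlam : Function.Injective lam)
    (a b : Fin s → ℝ)
    (h : ∀ x : ℝ, (∀ k, x ≠ lam k) →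
      (∑ k, a k / (x - lam k)) ^ 2 = (∑ k, b k / (x - lam k)) ^ 2) :
    (∀ k, a k = b k) ∨ (∀ k, a k = -(b k)) := by
  classical
  set p : Polynomial ℝ :=
    ∑ k, Polynomial.C (a k) * ∏ l ∈ Finset.univ.erase k, (Polynomial.X - Polynomial.C (lam l))
    with hp
  set q : Polynomial ℝ :=
    ∑ k, Polynomial.C (b k) * ∏ l ∈ Finset.univ.erase k, (Polynomial.X - Polynomial.C (lam l))
    with hq
  have heval : ∀ (c : Fin s → ℝ) (x : ℝ), (∀ k, x ≠ lam k) →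
      (∑ k, Polynomial.C (c k) *
        ∏ l ∈ Finset.univ.erase k, (Polynomial.X - Polynomial.C (lam l))).eval x
      = (∑ k, c k / (x - lam k)) * ∏ l, (x - lam l) := by
    intro c x hx
    rw [Polynomial.eval_finset_sum, Finset.sum_mul]
    refine Finset.sum_congr rfl fun k _ => ?_
    rw [Polynomial.eval_mul, Polynomial.eval_C, Polynomial.eval_prod]
    simp only [Polynomial.eval_sub, Polynomial.eval_X, Polynomial.eval_C]
    rw [← Finset.mul_prod_erase _ _ (Finset.mem_univ k), ← mul_assoc,
      div_mul_cancel₀ _ (sub_ne_zero.mpr (hx k))]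
  have hroots : (p - q) * (p + q) = 0 := by
    apply Polynomial.eq_zero_of_infinite_isRoot
    have hS : {x : ℝ | ∀ k, x ≠ lam k}.Infinite := by
      have : {x : ℝ | ∀ k, x ≠ lam k} = (Set.range lam)ᶜ := by
        ext x
        simp [Set.mem_range, not_exists, eq_comm]
      rw [this]
      exact (Set.finite_range lam).infinite_compl
    refine Set.Infinite.mono ?_ hS
    intro x hx
    have hx' : ∀ k, x ≠ lam k := hx
    have h1 := heval a x hx'
    have h2 := heval b x hx'
    simp only [Set.mem_setOf_eq, Polynomial.IsRoot, Polynomial.eval_mul, Polynomial.eval_sub,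
      Polynomial.eval_add]
    rw [← hp] at h1
    rw [← hq] at h2
    rw [h1, h2]
    have key := h x hx'
    linear_combination (∏ l, (x - lam l)) ^ 2 * key
  have hcj : ∀ j, (∏ l ∈ Finset.univ.erase j, (lam j - lam l)) ≠ 0 := by
    intro j
    refine Finset.prod_ne_zero_iff.mpr fun l hl => ?_
    exact sub_ne_zero.mpr fun hh => (Finset.mem_erase.mp hl).1 (hlam hh.symm)
  have hevalj : ∀ (c : Fin s → ℝ) (j : Fin s),
      (∑ k, Polynomial.C (c k) *
        ∏ l ∈ Finset.univ.erase k, (Polynomial.X - Polynomial.C (lam l))).eval (lam j)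
      = c j * ∏ l ∈ Finset.univ.erase j, (lam j - lam l) := by
    intro c j
    rw [Polynomial.eval_finset_sum]
    rw [Finset.sum_eq_single j]
    · rw [Polynomial.eval_mul, Polynomial.eval_C, Polynomial.eval_prod]
      simp only [Polynomial.eval_sub, Polynomial.eval_X, Polynomial.eval_C]
    · intro k _ hkj
      rw [Polynomial.eval_mul, Polynomial.eval_prod]
      have hj : j ∈ Finset.univ.erase k := Finset.mem_erase.mpr ⟨fun hh => hkj hh.symm, Finset.mem_univ j⟩
      rw [Finset.prod_eq_zero hj (by simp), mul_zero]
    · intro hj; exact absurd (Finset.mem_univ j) hj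
  rcases mul_eq_zero.mp hroots with h0 | h0
  · left
    intro j
    have hpq : p = q := sub_eq_zero.mp h0
    have := congrArg (Polynomial.eval (lam j)) hpq
    rw [hp, hq, hevalj a j, hevalj b j] at this
    exact mul_right_cancel₀ (hcj j) this
  · right
    intro j
    have hpq : p = -q := eq_neg_of_add_eq_zero_left h0
    have := congrArg (Polynomial.eval (lam j)) hpq
    rw [hp, Polynomial.eval_neg, hq, hevalj a j, hevalj b j] at this
    have := mul_right_cancel₀ (hcj j) (by rw [this]; ring : a j * _ = (-(b j)) * _)
    exact this

theorem stmt_16 (n s : ℕ) (A B : Matrix (Fin n) (Fin n) ℝ)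
    (hA : A.IsSymm) (hB : B.IsSymm)
    (lam : Fin s → ℝ) (hlam : Function.Injective lam)
    (r : Fin s → ℕ)
    (P : ∀ k : Fin s, Matrix (Fin n) (Fin (r k)) ℝ)
    (R : ∀ k : Fin s, Matrix (Fin n) (Fin (r k)) ℝ)
    (hP1 : ∀ k, (P k)ᵀ * P k = 1) (hR1 : ∀ k, (R k)ᵀ * R k = 1)
    (hP2 : ∀ k, A * P k = lam k • P k) (hR2 : ∀ k, B * R k = lam k • R k)
    (hPcomp : ∑ k, P k * (P k)ᵀ = 1) (hRcomp : ∑ k, R k * (R k)ᵀ = 1)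
    (α α' β β' : Fin n → ℝ)
    (hnorm1 : ∀ k, ((P k)ᵀ.mulVec α) ⬝ᵥ ((P k)ᵀ.mulVec α)
                 = ((R k)ᵀ.mulVec β) ⬝ᵥ ((R k)ᵀ.mulVec β))
    (hnorm2 : ∀ k, ((P k)ᵀ.mulVec α') ⬝ᵥ ((P k)ᵀ.mulVec α')
                 = ((R k)ᵀ.mulVec β') ⬝ᵥ ((R k)ᵀ.mulVec β'))
    (hcp : (A + Matrix.vecMulVec α α + Matrix.vecMulVec α' α').charpoly =
           (B + Matrix.vecMulVec β β + Matrix.vecMulVec β' β').charpoly) :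
    (∀ x : ℝ, (∀ k, x ≠ lam k) →
      (∑ k, ((P k)ᵀ.mulVec α) ⬝ᵥ ((P k)ᵀ.mulVec α') / (x - lam k)) ^ 2 =
      (∑ k, ((R k)ᵀ.mulVec β) ⬝ᵥ ((R k)ᵀ.mulVec β') / (x - lam k)) ^ 2) ∧
    ((∀ k, ((P k)ᵀ.mulVec α) ⬝ᵥ ((P k)ᵀ.mulVec α')
         = ((R k)ᵀ.mulVec β) ⬝ᵥ ((R k)ᵀ.mulVec β')) ∨
     (∀ k, ((P k)ᵀ.mulVec α) ⬝ᵥ ((P k)ᵀ.mulVec α')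
         = -(((R k)ᵀ.mulVec β) ⬝ᵥ ((R k)ᵀ.mulVec β')))) := by
  have part1 : ∀ x : ℝ, (∀ k, x ≠ lam k) →
      (∑ k, ((P k)ᵀ.mulVec α) ⬝ᵥ ((P k)ᵀ.mulVec α') / (x - lam k)) ^ 2 =
      (∑ k, ((R k)ᵀ.mulVec β) ⬝ᵥ ((R k)ᵀ.mulVec β') / (x - lam k)) ^ 2 := by
    intro x hx
    have hev := congrArg (Polynomial.eval x) hcp
    rw [eval_charpoly', eval_charpoly'] at hev
    rw [key_det A lam r P hP2 hPcomp α α' x hx,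
        key_det B lam r R hR2 hRcomp β β' x hx] at hev
    have hdA := det_resolvent A hA lam hlam r P hP1 hP2 hPcomp x
    have hdB := det_resolvent B hB lam hlam r R hR1 hR2 hRcomp x
    have hdne : (∏ p : (Σ k : Fin s, Fin (r k)), (x - lam p.1)) ≠ 0 :=
      Finset.prod_ne_zero_iff.mpr fun p _ => sub_ne_zero.mpr (hx p.1)
    rw [hdA, hdB] at hev
    have hmain := mul_left_cancel₀ hdne hev
    have e1 : (∑ k, ((P k)ᵀ.mulVec α ⬝ᵥ (P k)ᵀ.mulVec α) / (x - lam k))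
        = ∑ k, ((R k)ᵀ.mulVec β ⬝ᵥ (R k)ᵀ.mulVec β) / (x - lam k) :=
      Finset.sum_congr rfl fun k _ => by rw [hnorm1 k]
    have e2 : (∑ k, ((P k)ᵀ.mulVec α' ⬝ᵥ (P k)ᵀ.mulVec α') / (x - lam k))
        = ∑ k, ((R k)ᵀ.mulVec β' ⬝ᵥ (R k)ᵀ.mulVec β') / (x - lam k) :=
      Finset.sum_congr rfl fun k _ => by rw [hnorm2 k]
    rw [e1, e2] at hmain
    linarith [hmain]
  exact ⟨part1, sum_div_sq_cases lam hlam _ _ part1⟩
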